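/- Let k ≥ 2 and let Y ⊆ ℤ^k be a nonempty SL(k,ℤ)-invariant subset not containing the origin. Then Y is the union of the sets U_t over t in the set I = {t ≥ 1 : Y contains some t-visible element}, where U_t is the set of all t-visible points of ℤ^k. -/

import Mathlib

open Matrix

namespace SLvis

variable {k : ℕ}

/-- natural gcd of the absolute values of coordinates -/
def G (z : Fin k → ℤ) : ℕ := Finset.univ.gcd (fun i => (z i).natAbs)

/-- same SL(k,ℤ)-orbit -/
def Orb (z w : Fin k → ℤ) : Prop :=
  ∃ M : Matrix.SpecialLinearGroup (Fin k) ℤ, (M : Matrix (Fin k) (Fin k) ℤ).mulVec z = w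

lemma Orb.refl (z : Fin k → ℤ) : Orb z z := ⟨1, by simp⟩

lemma Orb.trans {x y z : Fin k → ℤ} (h1 : Orb x y) (h2 : Orb y z) : Orb x z := by
  obtain ⟨M, hM⟩ := h1; obtain ⟨N, hN⟩ := h2
  exact ⟨N * M, by rw [Matrix.SpecialLinearGroup.coe_mul, ← Matrix.mulVec_mulVec, hM, hN]⟩

lemma Orb.symm {x y : Fin k → ℤ} (h : Orb x y) : Orb y x := by
  obtain ⟨M, hM⟩ := h
  refine ⟨M⁻¹, ?_⟩
  have : ((M⁻¹ : Matrix.SpecialLinearGroup (Fin k) ℤ) : Matrix (Fin k) (Fin k) ℤ) *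
      (M : Matrix (Fin k) (Fin k) ℤ) = 1 := by
    rw [← Matrix.SpecialLinearGroup.coe_mul, inv_mul_cancel]; simp
  rw [← hM, Matrix.mulVec_mulVec, this, Matrix.one_mulVec]

lemma gcd_dvd_mulVec (M : Matrix (Fin k) (Fin k) ℤ) (z : Fin k → ℤ) :
    (G z) ∣ G (M.mulVec z) := by
  apply Finset.dvd_gcd
  intro i _
  apply Int.natCast_dvd.mp
  show ((G z : ℤ)) ∣ (M.mulVec z) i
  unfold Matrix.mulVec dotProduct
  apply Finset.dvd_sum
  intro j _
  have h1 : (G z) ∣ (z j).natAbs :=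
    Finset.gcd_dvd (f := fun i => (z i).natAbs) (Finset.mem_univ j)
  exact Dvd.dvd.mul_left (Int.natCast_dvd.mpr h1) _

lemma Orb.gcd_eq {z w : Fin k → ℤ} (h : Orb z w) : G w = G z := by
  obtain ⟨N, hN⟩ := Orb.symm h
  obtain ⟨M, hM⟩ := h
  exact Nat.dvd_antisymm (hN ▸ gcd_dvd_mulVec _ w) (hM ▸ gcd_dvd_mulVec _ z)

lemma transvection_mulVec (i j : Fin k) (c : ℤ) (z : Fin k → ℤ) :
    (Matrix.transvection i j c).mulVec z = Function.update z i (z i + c * z j) := by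
  funext l
  simp only [Matrix.transvection, Matrix.add_mulVec, Matrix.one_mulVec, Pi.add_apply,
    Function.update_apply, Matrix.mulVec, dotProduct, Matrix.single]
  by_cases hl : l = i
  · simp [hl, Matrix.one_apply, mul_add, mul_ite, Finset.sum_add_distrib,
      Finset.sum_ite_eq, Finset.sum_ite_eq', eq_comm, mul_comm]
  · simp [hl, Matrix.one_apply, mul_add, mul_ite, Finset.sum_add_distrib,
      Finset.sum_ite_eq, Finset.sum_ite_eq', ite_and, Ne.symm hl, mul_comm]

lemma Orb.step (i j : Fin k) (hij : i ≠ j) (c : ℤ) (z : Fin k → ℤ) :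
    Orb z (Function.update z i (z i + c * z j)) :=
  ⟨⟨Matrix.transvection i j c, Matrix.det_transvection_of_ne i j hij c⟩,
    transvection_mulVec i j c z⟩


lemma Orb.move {i j : Fin k} (hij : i ≠ j) (a : ℤ) :
    Orb (Pi.single i a) (Pi.single j a) := by
  set v := Function.update (Pi.single i a : Fin k → ℤ) j
      ((Pi.single i a : Fin k → ℤ) j + 1 * (Pi.single i a : Fin k → ℤ) i) with hv
  have s1 : Orb (Pi.single i a) v := Orb.step j i hij.symm 1 _
  have s2 : Orb v (Function.update v i (v i + (-1) * v j)) := Orb.step i j hij (-1) _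
  have key : Function.update v i (v i + (-1) * v j) = Pi.single j a := by
    funext l
    by_cases hli : l = i
    · subst hli
      simp [hv, Function.update_apply, Pi.single_apply, hij, Ne.symm hij]
    · by_cases hlj : l = j
      · subst hlj
        simp [hv, Function.update_apply, Pi.single_apply, hij, Ne.symm hij, hli]
      · simp [hv, Function.update_apply, Pi.single_apply, hli, hlj, Ne.symm hli, Ne.symm hlj]
  exact s1.trans (key ▸ s2)

lemma Orb.flip {i j : Fin k} (hij : i ≠ j) (a : ℤ) :
    Orb (Pi.single i a) (Pi.single i (-a)) := by
  have m1 : Orb (Pi.single i a) (Pi.single j a) := Orb.move hij a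
  set v := Function.update (Pi.single j a : Fin k → ℤ) i
      ((Pi.single j a : Fin k → ℤ) i + (-1) * (Pi.single j a : Fin k → ℤ) j) with hv
  have s2 : Orb (Pi.single j a) v := Orb.step i j hij (-1) _
  set w := Function.update v j (v j + 1 * v i) with hw
  have s3 : Orb v w := Orb.step j i hij.symm 1 _
  have key : w = Pi.single i (-a) := by
    funext l
    by_cases hli : l = i
    · subst hli
      simp [hw, hv, Function.update_apply, Pi.single_apply, hij, Ne.symm hij]
    · by_cases hlj : l = j
      · subst hlj
        simp [hw, hv, Function.update_apply, Pi.single_apply, hij, Ne.symm hij, hli]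
      · simp [hw, hv, Function.update_apply, Pi.single_apply, hli, hlj, Ne.symm hli, Ne.symm hlj]
  exact (m1.trans s2).trans (key ▸ s3)

lemma Orb.single_to_abs (hk : 2 ≤ k) (i : Fin k) (a : ℤ) :
    Orb (Pi.single i a) (Pi.single (⟨0, by omega⟩ : Fin k) (|a| : ℤ)) := by
  set i0 : Fin k := ⟨0, by omega⟩ with hi0
  set i1 : Fin k := ⟨1, by omega⟩ with hi1
  have h01 : i0 ≠ i1 := by simp [hi0, hi1, Fin.ext_iff]
  have step1 : Orb (Pi.single i a) (Pi.single i0 a) := by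
    by_cases h : i = i0
    · subst h; exact Orb.refl _
    · exact Orb.move h a
  rcases le_or_gt 0 a with ha | ha
  · rwa [abs_of_nonneg ha]
  · rw [abs_of_neg ha]
    exact step1.trans (Orb.flip h01 a)


lemma reduce (hk : 2 ≤ k) :
    ∀ n (z : Fin k → ℤ), (∑ i, (z i).natAbs) ≤ n → z ≠ 0 →
      Orb z (Pi.single (⟨0, by omega⟩ : Fin k) ((G z : ℕ) : ℤ)) := by
  intro n
  induction n with
  | zero =>
    intro z hsum hz
    exfalso
    apply hz
    funext i
    have h0 := Finset.sum_eq_zero_iff.mp (Nat.le_zero.mp hsum) i (Finset.mem_univ i)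
    simpa [Int.natAbs_eq_zero] using h0
  | succ n ih =>
    intro z hsum hz
    by_cases hone : ∃ i j : Fin k, i ≠ j ∧ z i ≠ 0 ∧ z j ≠ 0
    · obtain ⟨i, j, hij, hi, hj⟩ := hone
      suffices h : ∀ i j : Fin k, i ≠ j → z i ≠ 0 → z j ≠ 0 →
          (z i).natAbs ≤ (z j).natAbs →
          Orb z (Pi.single (⟨0, by omega⟩ : Fin k) ((G z : ℕ) : ℤ)) by
        rcases le_total ((z i).natAbs) ((z j).natAbs) with hle | hle
        · exact h i j hij hi hj hle
        · exact h j i hij.symm hj hi hle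
      intro i j hij hi hj hle
      set c : ℤ := -(z j / z i) with hc
      have hstep : Orb z (Function.update z j (z j + c * z i)) := Orb.step j i hij.symm c z
      set w := Function.update z j (z j + c * z i) with hw
      have hwj : w j = z j % z i := by
        simp only [hw, Function.update_self, hc]
        rw [Int.emod_def]; ring
      have hwi : w i = z i := Function.update_of_ne hij _ _
      have hlt : (w j).natAbs < (z j).natAbs := by
        have h1 : 0 ≤ z j % z i := Int.emod_nonneg _ hi
        have h2 : z j % z i < |z i| := by
          have := Int.emod_lt (z j) hi; rwa [Int.natCast_natAbs] at this
        have h3 : (z j % z i).natAbs < (|z i| : ℤ).natAbs :=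
          Int.natAbs_lt_natAbs_of_nonneg_of_lt h1 h2
        rw [Int.natAbs_abs] at h3
        rw [hwj]
        omega
      have hsumw : ∑ l, (w l).natAbs = (w j).natAbs + ∑ l ∈ Finset.univ.erase j, (z l).natAbs := by
        rw [← Finset.add_sum_erase _ _ (Finset.mem_univ j)]
        congr 1
        refine Finset.sum_congr rfl fun l hl => ?_
        rw [hw, Function.update_of_ne (Finset.ne_of_mem_erase hl)]
      have hsumz : ∑ l, (z l).natAbs = (z j).natAbs + ∑ l ∈ Finset.univ.erase j, (z l).natAbs :=
        (Finset.add_sum_erase _ _ (Finset.mem_univ j)).symm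
      have hsum' : ∑ l, (w l).natAbs ≤ n := by omega
      have hw0 : w ≠ 0 := by
        intro h
        apply hi
        rw [← hwi, h, Pi.zero_apply]
      have horb := ih w hsum' hw0
      have hG : G w = G z := Orb.gcd_eq hstep
      rw [hG] at horb
      exact hstep.trans horb
    · obtain ⟨i, hi⟩ := Function.ne_iff.mp hz
      rw [Pi.zero_apply] at hi
      have hzero : ∀ l, l ≠ i → z l = 0 := by
        intro l hl
        by_contra hlz
        exact hone ⟨i, l, Ne.symm hl, hi, hlz⟩
      have hzeq : z = Pi.single i (z i) := by
        funext l
        by_cases hl : l = i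
        · subst hl; simp
        · simp [Pi.single_apply, hl, hzero l hl]
      have hGz : ((G z : ℕ) : ℤ) = |z i| := by
        have h1 : G z = (z i).natAbs := by
          refine Nat.dvd_antisymm (Finset.gcd_dvd (f := fun l => (z l).natAbs) (Finset.mem_univ i)) ?_
          refine Finset.dvd_gcd fun l _ => ?_
          by_cases hl : l = i
          · subst hl; exact dvd_rfl
          · rw [hzero l hl]; simp
        rw [h1, Int.natCast_natAbs]
      rw [hGz]
      have := Orb.single_to_abs hk i (z i)
      rwa [← hzeq] at this

lemma orb_of_gcd_eq (hk : 2 ≤ k) {z w : Fin k → ℤ} (hz : z ≠ 0) (hw : w ≠ 0)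
    (h : G z = G w) : Orb z w := by
  have h1 := reduce hk (∑ i, (z i).natAbs) z le_rfl hz
  have h2 := reduce hk (∑ i, (w i).natAbs) w le_rfl hw
  rw [h] at h1
  exact h1.trans h2.symm

end SLvis

theorem SL_invariant_eq_union_visible (k : ℕ) (hk : 2 ≤ k) (Y : Set (Fin k → ℤ))
    (hne : Y.Nonempty) (h0 : (0 : Fin k → ℤ) ∉ Y)
    (hinv : ∀ M : Matrix.SpecialLinearGroup (Fin k) ℤ,
      (fun z => (M : Matrix (Fin k) (Fin k) ℤ).mulVec z) '' Y = Y) :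
    Y = ⋃ t ∈ {t : ℕ | 1 ≤ t ∧ ∃ z ∈ Y, Finset.univ.gcd (fun i => (z i).natAbs) = t},
          {z : Fin k → ℤ | z ≠ 0 ∧ Finset.univ.gcd (fun i => (z i).natAbs) = t} := by
  ext z
  simp only [Set.mem_iUnion, Set.mem_setOf_eq, exists_prop]
  constructor
  · intro hz
    have hz0 : z ≠ 0 := fun h => h0 (h ▸ hz)
    have ht1 : 1 ≤ SLvis.G z := by
      rcases Nat.eq_zero_or_pos (SLvis.G z) with h | h
      · exfalso
        apply hz0
        funext i
        have := Finset.gcd_eq_zero_iff.mp h i (Finset.mem_univ i)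
        simpa [Int.natAbs_eq_zero] using this
      · exact h
    exact ⟨SLvis.G z, ⟨ht1, z, hz, rfl⟩, hz0, rfl⟩
  · rintro ⟨t, ⟨ht1, w, hwY, hwG⟩, hz0, hzG⟩
    have hw0 : w ≠ 0 := fun h => h0 (h ▸ hwY)
    have horb : SLvis.Orb w z :=
      SLvis.orb_of_gcd_eq hk hw0 hz0 (by rw [SLvis.G, SLvis.G, hwG, hzG])
    obtain ⟨M, hM⟩ := horb
    rw [← hinv M]
    exact ⟨w, hwY, hM⟩
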